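/- arXiv:2007.05049 — 7 statements merged into one kernel-verified Lean document; each statement's English description precedes it below -/
import Mathlib

section
/- Let X and Y be finite alphabets with |X| ≥ 2, let α ∈ (0,1), ε ∈ (0, 1 − 1/|X|], and fix x₀ ∈ X, y₀ ∈ Y. Define joint probability distributions q and p on X × Y by: q(x₀,y₀) = 1 and q(x,y) = 0 otherwise; p(x₀,y₀) = 1 − ε, p(x,y₀) = ε/(|X|−1) for x ≠ x₀, and p(x,y) = 0 for y ≠ y₀. Then TV(p,q) = ε, H_α(X|Y)_q = 0, and H_α(X|Y)_p = (1/(1−α)) · log₂( (1−ε)^α + (|X|−1)^{1−α} · ε^α ); in particular the continuity bound |H_α(X|Y)_p − H_α(X|Y)_q| ≤ (1/(1−α)) · log₂( (1−ε)^α + (|X|−1)^{1−α} · ε^α ) is attained with equality. -/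
/-- Arimoto–Rényi conditional entropy of order `α` (base-2 logarithm),
for a joint distribution `p : X → Y → ℝ`. -/
noncomputable def condRenyi {X Y : Type*} [Fintype X] [Fintype Y]
    (α : ℝ) (p : X → Y → ℝ) : ℝ :=
  (α / (1 - α)) * Real.logb 2 (∑ y, (∑ x, p x y ^ α) ^ (1 / α))

/-- Total variation distance between two joint distributions on `X × Y`. -/
noncomputable def TV {X Y : Type*} [Fintype X] [Fintype Y]
    (p q : X → Y → ℝ) : ℝ :=
  (1 / 2) * ∑ x, ∑ y, |p x y - q x y|

lemma sum_if_aux {X : Type*} [Fintype X] [DecidableEq X] (x₀ : X) (A B : ℝ) :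
    ∑ x : X, (if x = x₀ then A else B) = A + ((Fintype.card X : ℝ) - 1) * B := by
  have : ∀ x : X, (if x = x₀ then A else B) = (if x = x₀ then A - B else 0) + B := by
    intro x; by_cases h : x = x₀ <;> simp [h]
  simp only [this, Finset.sum_add_distrib, Finset.sum_ite_eq' Finset.univ x₀,
    Finset.mem_univ, if_true, Finset.sum_const, Finset.card_univ, nsmul_eq_mul]
  ring

theorem arce_continuity_bound_tight
    {X Y : Type*} [Fintype X] [Fintype Y] [DecidableEq X] [DecidableEq Y]
    (hX : 2 ≤ Fintype.card X)
    (α ε : ℝ) (hα : α ∈ Set.Ioo (0 : ℝ) 1)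
    (hε : ε ∈ Set.Ioc (0 : ℝ) (1 - 1 / (Fintype.card X : ℝ)))
    (x₀ : X) (y₀ : Y)
    (q p : X → Y → ℝ)
    (hq : q = fun x y => if x = x₀ ∧ y = y₀ then 1 else 0)
    (hp : p = fun x y =>
      if y = y₀ then
        (if x = x₀ then 1 - ε else ε / ((Fintype.card X : ℝ) - 1))
      else 0) :
    TV p q = ε ∧
    condRenyi α q = 0 ∧
    condRenyi α p =
      (1 / (1 - α)) *
        Real.logb 2 ((1 - ε) ^ α + ((Fintype.card X : ℝ) - 1) ^ (1 - α) * ε ^ α) ∧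
    |condRenyi α p - condRenyi α q| =
      (1 / (1 - α)) *
        Real.logb 2 ((1 - ε) ^ α + ((Fintype.card X : ℝ) - 1) ^ (1 - α) * ε ^ α) := by
  obtain ⟨hα0, hα1⟩ := hα
  obtain ⟨hε0, hε1⟩ := hε
  set n : ℝ := (Fintype.card X : ℝ) with hn
  have hn2 : (2 : ℝ) ≤ n := by rw [hn]; exact_mod_cast hX
  have hnpos : (0 : ℝ) < n := by linarith
  have hc : (1 : ℝ) ≤ n - 1 := by linarith
  have hcpos : (0 : ℝ) < n - 1 := by linarith
  have hinv : (0 : ℝ) < 1 / n := by positivity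
  have hε1' : ε < 1 := by nlinarith
  have h1ε : (0 : ℝ) < 1 - ε := by linarith
  have hεc : ε ≤ n - 1 := by linarith
  have hαne : α ≠ 0 := hα0.ne'
  have h1αne : (1 : ℝ) - α ≠ 0 := by intro h; nlinarith
  have hlog2 : Real.log 2 ≠ 0 := by
    have := Real.log_pos (by norm_num : (1:ℝ) < 2); linarith
  -- TV
  have hTV : TV p q = ε := by
    have key : ∀ x : X, (∑ y, |p x y - q x y|) =
        if x = x₀ then ε else ε / (n - 1) := by
      intro x
      have habs : ∀ y : Y, |p x y - q x y| =
          if y = y₀ then (if x = x₀ then ε else ε / (n - 1)) else 0 := by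
        intro y
        subst hp hq
        by_cases hy : y = y₀
        · by_cases hx : x = x₀
          · simp only [hy, hx, and_self, if_true]
            rw [show (1 : ℝ) - ε - 1 = -ε by ring, abs_neg, abs_of_nonneg hε0.le]
          · simp only [hy, hx, and_true, if_true, if_false, if_neg hx, sub_zero]
            exact abs_of_nonneg (by positivity)
        · simp [hy]
      simp [habs, Finset.sum_ite_eq' Finset.univ y₀]
    have hsum : (∑ x, ∑ y, |p x y - q x y|) = ε + (n - 1) * (ε / (n - 1)) := by
      simp only [key]; exact sum_if_aux x₀ _ _
    rw [TV, hsum, mul_div_cancel₀ _ hcpos.ne']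
    ring
  -- condRenyi q = 0
  have hQ : condRenyi α q = 0 := by
    have hinner : ∀ y : Y, (∑ x, q x y ^ α) = if y = y₀ then 1 else 0 := by
      intro y
      subst hq
      by_cases hy : y = y₀
      · simp [hy, Real.zero_rpow hαne, Finset.sum_ite_eq' Finset.univ x₀]
      · simp [hy, Real.zero_rpow hαne]
    rw [condRenyi]
    simp only [hinner]
    rw [Finset.sum_eq_single y₀]
    · simp
    · intro y _ hy
      rw [if_neg hy]
      exact Real.zero_rpow (one_div_ne_zero hαne)
    · simp
  -- condRenyi p
  set S : ℝ := (1 - ε) ^ α + (n - 1) ^ (1 - α) * ε ^ α with hS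
  have hSpos : 0 < S := by
    have h1 : 0 < (1 - ε) ^ α := Real.rpow_pos_of_pos h1ε α
    have h2 : 0 ≤ (n - 1) ^ (1 - α) * ε ^ α := by positivity
    linarith
  have hP : condRenyi α p = (1 / (1 - α)) * Real.logb 2 S := by
    have hinner : ∀ y : Y, (∑ x, p x y ^ α) = if y = y₀ then S else 0 := by
      intro y
      subst hp
      by_cases hy : y = y₀
      · simp only [hy, if_true]
        have hpow : ∀ x : X, ((if x = x₀ then 1 - ε else ε / (n - 1)) : ℝ) ^ α =
            if x = x₀ then (1 - ε) ^ α else (ε / (n - 1)) ^ α := by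
          intro x; by_cases hx : x = x₀ <;> simp [hx]
        simp only [hpow]
        rw [sum_if_aux x₀, Real.div_rpow hε0.le hcpos.le, hS]
        have h2 : (n - 1) * (ε ^ α / (n - 1) ^ α) = (n - 1) ^ (1 - α) * ε ^ α := by
          rw [Real.rpow_sub hcpos, Real.rpow_one]
          field_simp
        rw [h2]
      · simp [hy, Real.zero_rpow hαne]
    rw [condRenyi]
    simp only [hinner]
    rw [Finset.sum_eq_single y₀]
    · rw [if_pos rfl, Real.logb, Real.logb, Real.log_rpow hSpos]
      field_simp
    · intro y _ hy
      rw [if_neg hy]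
      exact Real.zero_rpow (one_div_ne_zero hαne)
    · simp
  have hS1 : 1 ≤ S := by
    have h1 : 1 - ε ≤ (1 - ε) ^ α := by
      calc 1 - ε = (1 - ε) ^ (1 : ℝ) := (Real.rpow_one _).symm
        _ ≤ (1 - ε) ^ α := Real.rpow_le_rpow_of_exponent_ge h1ε (by linarith) hα1.le
    have h2 : ε ≤ (n - 1) ^ (1 - α) * ε ^ α := by
      have hle : ε ^ (1 - α) ≤ (n - 1) ^ (1 - α) :=
        Real.rpow_le_rpow hε0.le hεc (by linarith)
      calc ε = ε ^ ((1 - α) + α) := by rw [show (1 - α) + α = 1 by ring, Real.rpow_one]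
        _ = ε ^ (1 - α) * ε ^ α := Real.rpow_add hε0 _ _
        _ ≤ (n - 1) ^ (1 - α) * ε ^ α :=
          mul_le_mul_of_nonneg_right hle (Real.rpow_nonneg hε0.le α)
    rw [hS]; linarith
  refine ⟨hTV, hQ, hP, ?_⟩
  rw [hQ, hP, sub_zero]
  exact abs_of_nonneg (mul_nonneg (one_div_nonneg.mpr (by linarith))
    (Real.logb_nonneg (by norm_num) hS1))
end

section
/- Let p be a joint probability distribution on finite alphabets X × Y, all of whose entries p(x,y) are strictly positive. Then the limit as α → 1⁻ (over α ∈ (0,1)) of the Arimoto–Rényi conditional entropy H_α(X|Y)_p equals the conditional Shannon entropy H(X|Y)_p. -/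
/-- Conditional Shannon entropy (base-2 logarithm) of a joint distribution
`p : X → Y → ℝ`; terms with `p x y = 0` vanish. -/
noncomputable def condShannon {X Y : Type*} [Fintype X] [Fintype Y]
    (p : X → Y → ℝ) : ℝ :=
  -∑ y, ∑ x, p x y * Real.logb 2 (p x y / ∑ x', p x' y)

theorem arce_tendsto_condShannon
    {X Y : Type*} [Fintype X] [Fintype Y]
    (p : X → Y → ℝ)
    (hp0 : ∀ x y, 0 < p x y) (hp1 : (∑ x, ∑ y, p x y) = 1) :
    Filter.Tendsto (fun α : ℝ => condRenyi α p)
      (nhdsWithin 1 (Set.Ioo (0 : ℝ) 1))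
      (nhds (condShannon p)) := by
  classical
  rcases isEmpty_or_nonempty X with hX | hX
  · simp at hp1
  rcases isEmpty_or_nonempty Y with hY | hY
  · simp at hp1
  set q : Y → ℝ := fun y => ∑ x, p x y with hqdef
  have hqpos : ∀ y, 0 < q y := fun y =>
    Finset.sum_pos (fun x _ => hp0 x y) Finset.univ_nonempty
  set g : ℝ → ℝ := fun α => ∑ y, (∑ x, p x y ^ α) ^ (1 / α) with hgdef
  set D : ℝ := ∑ y, ((∑ x, p x y * Real.log (p x y)) - q y * Real.log (q y)) with hDdef
  have hg1 : g 1 = 1 := by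
    have : g 1 = ∑ y, q y := by
      simp [hgdef, Real.rpow_one, hqdef]
    rw [this, ← hp1, Finset.sum_comm]
  -- derivative of g at 1
  have hgderiv : HasDerivAt g D 1 := by
    apply HasDerivAt.fun_sum
    intro y _
    have hS : HasDerivAt (fun α : ℝ => ∑ x, p x y ^ α)
        (∑ x, p x y * Real.log (p x y)) 1 := by
      apply HasDerivAt.fun_sum
      intro x _
      simpa [Real.rpow_one] using
        (Real.hasStrictDerivAt_const_rpow (hp0 x y) 1).hasDerivAt
    have hSpos : 0 < ∑ x, p x y ^ (1:ℝ) := by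
      apply Finset.sum_pos (fun x _ => Real.rpow_pos_of_pos (hp0 x y) 1)
        Finset.univ_nonempty
    have hinv : HasDerivAt (fun α : ℝ => 1 / α) (-1) 1 := by
      simpa [one_div] using hasDerivAt_inv (one_ne_zero (α := ℝ))
    have := hS.rpow hinv hSpos
    have hS1 : (∑ x, p x y ^ (1:ℝ)) = q y := by simp [Real.rpow_one, hqdef]
    simpa [hS1, Real.rpow_one, hqdef, sub_eq_add_neg] using this
  -- derivative of f = logb 2 ∘ g at 1
  set f : ℝ → ℝ := fun α => Real.logb 2 (g α) with hfdef
  have hfderiv : HasDerivAt f (D / Real.log 2) 1 := by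
    have hlog : HasDerivAt (fun α => Real.log (g α)) (D / g 1) 1 :=
      hgderiv.log (by rw [hg1]; exact one_ne_zero)
    have : HasDerivAt (fun α => Real.log (g α) / Real.log 2)
        ((D / g 1) / Real.log 2) 1 := hlog.div_const _
    simpa [hfdef, Real.logb, hg1] using this
  have hslope : Filter.Tendsto (slope f 1) (nhdsWithin 1 {(1:ℝ)}ᶜ)
      (nhds (D / Real.log 2)) := hasDerivAt_iff_tendsto_slope.mp hfderiv
  have hmono : nhdsWithin (1:ℝ) (Set.Ioo 0 1) ≤ nhdsWithin 1 {(1:ℝ)}ᶜ :=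
    nhdsWithin_mono _ (fun a ha => ne_of_lt ha.2)
  have hneg : Filter.Tendsto (fun α : ℝ => -α) (nhdsWithin 1 (Set.Ioo 0 1))
      (nhds (-1)) :=
    (continuous_neg.tendsto 1).mono_left nhdsWithin_le_nhds
  have hprod : Filter.Tendsto (fun α : ℝ => (-α) * slope f 1 α)
      (nhdsWithin 1 (Set.Ioo 0 1)) (nhds ((-1) * (D / Real.log 2))) :=
    hneg.mul (hslope.mono_left hmono)
  have hEq : ∀ᶠ α in nhdsWithin (1:ℝ) (Set.Ioo 0 1),
      (-α) * slope f 1 α = condRenyi α p := by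
    filter_upwards [self_mem_nhdsWithin] with α hα
    have hα1 : α ≠ 1 := ne_of_lt hα.2
    have hf1 : f 1 = 0 := by simp [hfdef, hg1]
    have : slope f 1 α = f α / (α - 1) := by
      rw [slope_def_field, hf1]; ring
    rw [this]
    have hcr : condRenyi α p = α / (1 - α) * f α := rfl
    rw [hcr]
    have h1 : α - 1 ≠ 0 := sub_ne_zero.mpr hα1
    have h2 : (1:ℝ) - α ≠ 0 := sub_ne_zero.mpr (Ne.symm hα1)
    field_simp
    ring
  have hfinal : Filter.Tendsto (fun α : ℝ => condRenyi α p)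
      (nhdsWithin 1 (Set.Ioo 0 1)) (nhds ((-1) * (D / Real.log 2))) :=
    hprod.congr' hEq
  -- identify the limit
  have hterm : ∀ y : Y, ∑ x, p x y * Real.logb 2 (p x y / ∑ x', p x' y)
      = ((∑ x, p x y * Real.log (p x y))
          - (∑ x', p x' y) * Real.log (∑ x', p x' y)) / Real.log 2 := by
    intro y
    have h1 : ∀ x ∈ (Finset.univ : Finset X),
        p x y * Real.logb 2 (p x y / ∑ x', p x' y)
        = p x y * Real.log (p x y) / Real.log 2
          - p x y * Real.log (∑ x', p x' y) / Real.log 2 := by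
      intro x _
      rw [Real.logb, Real.log_div (ne_of_gt (hp0 x y)) (ne_of_gt (hqpos y))]
      ring
    rw [Finset.sum_congr rfl h1, Finset.sum_sub_distrib, ← Finset.sum_div,
      ← Finset.sum_div, ← Finset.sum_mul, sub_div]
  have hlim : (-1) * (D / Real.log 2) = condShannon p := by
    simp only [condShannon]
    rw [neg_one_mul, neg_inj, hDdef, Finset.sum_div]
    refine Finset.sum_congr rfl fun y _ => ?_
    rw [hterm y, sub_div]
  rwa [hlim] at hfinal
end

section
/- Let α ∈ (0,1) and let p and q be joint probability distributions on finite alphabets X × Y such that for every y ∈ Y the column vector (q(x,y))_{x∈X} is majorized by the column vector (p(x,y))_{x∈X}. Then H_α(X|Y)_p ≤ H_α(X|Y)_q. -/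
open Finset Real Filter

/-- The sum of the `k` largest entries of a real vector, expressed as the
supremum of sums over subsets of cardinality `k`. -/
noncomputable def kLargestSum {ι : Type*} [Fintype ι] (u : ι → ℝ) (k : ℕ) : ℝ :=
  sSup {s : ℝ | ∃ A : Finset ι, A.card = k ∧ s = ∑ i ∈ A, u i}

/-- `u` is majorized by `v`: for every `k = 1, …, d` the sum of the `k` largest
entries of `u` is at most that of `v`, with equality of total sums. -/
def Majorized {ι : Type*} [Fintype ι] (u v : ι → ℝ) : Prop :=
  (∀ k : ℕ, 1 ≤ k → k ≤ Fintype.card ι → kLargestSum u k ≤ kLargestSum v k) ∧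
    (∑ i, u i) = ∑ i, v i

/-- Tangent line inequality for the concave function `x ↦ x ^ α`, `0 < α < 1`. -/
lemma tangent_rpow {α : ℝ} (hα0 : 0 < α) (hα1 : α < 1) {u v : ℝ} (hu : 0 ≤ u) (hv : 0 < v) :
    u ^ α ≤ v ^ α + α * v ^ (α - 1) * (u - v) := by
  have ht : -1 ≤ u / v - 1 := by
    have : 0 ≤ u / v := div_nonneg hu hv.le
    linarith
  have hb := rpow_one_add_le_one_add_mul_self ht hα0.le hα1.le
  rw [add_sub_cancel] at hb
  have hvα : 0 < v ^ α := Real.rpow_pos_of_pos hv α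
  have h1 : u ^ α = v ^ α * (u / v) ^ α := by
    rw [Real.div_rpow hu hv.le]
    field_simp
  have h2 : v ^ (α - 1) = v ^ α / v := by
    rw [Real.rpow_sub hv, Real.rpow_one]
  calc u ^ α = v ^ α * (u / v) ^ α := h1
    _ ≤ v ^ α * (1 + α * (u / v - 1)) := by
        exact mul_le_mul_of_nonneg_left hb hvα.le
    _ = v ^ α + α * v ^ (α - 1) * (u - v) := by
        rw [h2]; field_simp

lemma abel_nonpos (c δ : ℕ → ℝ) (n : ℕ)
    (hc : ∀ i j, i ≤ j → j < n → c i ≤ c j)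
    (hD : ∀ k, k ≤ n → 0 ≤ ∑ i ∈ range k, δ i)
    (hDn : ∑ i ∈ range n, δ i = 0) :
    ∑ i ∈ range n, c i * δ i ≤ 0 := by
  have key : ∀ k, k ≤ n → ∑ i ∈ range k, c i * δ i ≤ c (k - 1) * ∑ i ∈ range k, δ i := by
    intro k
    induction k with
    | zero => intro _; simp
    | succ k ih =>
      intro hk1
      have hk : k ≤ n := by omega
      have h1 := ih hk
      have h2 : c (k - 1) ≤ c k := hc (k - 1) k (by omega) (by omega)
      have h3 := hD k hk
      rw [Finset.sum_range_succ, Finset.sum_range_succ]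
      have : c (k - 1) * ∑ i ∈ range k, δ i ≤ c k * ∑ i ∈ range k, δ i :=
        mul_le_mul_of_nonneg_right h2 h3
      simp only [Nat.add_sub_cancel]
      nlinarith [h1, this]
  have := key n le_rfl
  rw [hDn] at this
  simpa using this

lemma karamata_rpow {α : ℝ} (hα0 : 0 < α) (hα1 : α < 1) (n : ℕ) (a b : ℕ → ℝ)
    (ha0 : ∀ i, i < n → 0 ≤ a i) (hb0 : ∀ i, i < n → 0 ≤ b i)
    (has : ∀ i j, i ≤ j → j < n → a j ≤ a i)
    (hpart : ∀ k, k ≤ n → ∑ i ∈ range k, a i ≤ ∑ i ∈ range k, b i)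
    (htot : ∑ i ∈ range n, a i = ∑ i ∈ range n, b i) :
    ∑ i ∈ range n, b i ^ α ≤ ∑ i ∈ range n, a i ^ α := by
  have heps : ∀ ε : ℝ, 0 < ε →
      ∑ i ∈ range n, (b i + ε) ^ α ≤ ∑ i ∈ range n, (a i + ε) ^ α := by
    intro ε hε
    set c : ℕ → ℝ := fun i => α * (a i + ε) ^ (α - 1) with hc_def
    set δ : ℕ → ℝ := fun i => b i - a i with hδ_def
    have step : ∀ i ∈ range n, (b i + ε) ^ α ≤ (a i + ε) ^ α + c i * δ i := by
      intro i hi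
      rw [Finset.mem_range] at hi
      have h := tangent_rpow hα0 hα1 (u := b i + ε) (v := a i + ε)
        (by linarith [hb0 i hi]) (by linarith [ha0 i hi])
      simpa [hc_def, hδ_def, mul_assoc] using h.trans_eq (by ring)
    have habel : ∑ i ∈ range n, c i * δ i ≤ 0 := by
      apply abel_nonpos
      · intro i j hij hj
        have hji : a j ≤ a i := has i j hij hj
        have h1 : (0:ℝ) < a j + ε := by linarith [ha0 j hj]
        have h2 : (a i + ε) ^ (α - 1) ≤ (a j + ε) ^ (α - 1) :=
          Real.rpow_le_rpow_of_nonpos h1 (by linarith) (by linarith)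
        exact mul_le_mul_of_nonneg_left h2 hα0.le
      · intro k hk
        have := hpart k hk
        rw [hδ_def]
        rw [Finset.sum_sub_distrib]
        linarith
      · rw [hδ_def, Finset.sum_sub_distrib]
        linarith
    calc ∑ i ∈ range n, (b i + ε) ^ α
        ≤ ∑ i ∈ range n, ((a i + ε) ^ α + c i * δ i) := Finset.sum_le_sum step
      _ = ∑ i ∈ range n, (a i + ε) ^ α + ∑ i ∈ range n, c i * δ i := Finset.sum_add_distrib
      _ ≤ ∑ i ∈ range n, (a i + ε) ^ α := by linarith
  -- pass to the limit ε → 0⁺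
  have key : ∀ v : ℕ → ℝ, Tendsto (fun ε : ℝ => ∑ i ∈ range n, (v i + ε) ^ α)
      (nhdsWithin 0 (Set.Ioi 0)) (nhds (∑ i ∈ range n, v i ^ α)) := by
    intro v
    apply tendsto_nhdsWithin_of_tendsto_nhds
    apply tendsto_finset_sum
    intro i _
    have h1 : Tendsto (fun ε : ℝ => v i + ε) (nhds 0) (nhds (v i)) := by
      simpa using (tendsto_const_nhds (x := v i)).add (tendsto_id (x := nhds (0:ℝ)))
    exact ((Real.continuousAt_rpow_const (v i) α (Or.inr hα0.le)).tendsto).comp h1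
  exact le_of_tendsto_of_tendsto (key b) (key a)
    (eventually_mem_nhdsWithin.mono fun ε hε => heps ε hε)

lemma strictMono_fin_le {k d : ℕ} {f : Fin k → Fin d} (hf : StrictMono f) (j : Fin k) :
    (j : ℕ) ≤ (f j : ℕ) := by
  suffices h : ∀ m : ℕ, ∀ j : Fin k, (j : ℕ) = m → (j : ℕ) ≤ (f j : ℕ) by exact h _ j rfl
  intro m
  induction m with
  | zero => intro j hj; omega
  | succ m ih =>
    intro j hj
    have hjk := j.isLt
    have hmk : m < k := by omega
    have h1 : f ⟨m, hmk⟩ < f j := hf (by simp [Fin.lt_def, hj])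
    have h2 : m ≤ ((f ⟨m, hmk⟩ : Fin d) : ℕ) := by simpa using ih ⟨m, hmk⟩ rfl
    simp only [Fin.lt_def] at h1
    omega

/-- Sum over any `k`-subset of an "antitone on `[0,d)`" vector is at most the top-`k` sum. -/
lemma subset_sum_le {d k : ℕ} (s : ℕ → ℝ)
    (hs : ∀ i j, i ≤ j → j < d → s j ≤ s i)
    (B : Finset (Fin d)) (hB : B.card = k) :
    ∑ i ∈ B, s (i : ℕ) ≤ ∑ j ∈ range k, s j := by
  classical
  set f := B.orderEmbOfFin hB with hf
  have hBmap : B = Finset.map f.toEmbedding Finset.univ := by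
    ext i
    simp only [Finset.mem_map, Finset.mem_univ, true_and]
    constructor
    · intro hi
      have : i ∈ Set.range f := by rw [Finset.range_orderEmbOfFin]; exact hi
      obtain ⟨j, hj⟩ := this
      exact ⟨j, hj⟩
    · rintro ⟨j, rfl⟩
      exact Finset.orderEmbOfFin_mem B hB j
  rw [hBmap, Finset.sum_map]
  rw [← Fin.sum_univ_eq_sum_range (fun j => s j) k]
  apply Finset.sum_le_sum
  intro j _
  exact hs (j : ℕ) ((f j : Fin d) : ℕ) (strictMono_fin_le f.strictMono j) (f j).2

lemma exists_sorted {ι : Type*} [Fintype ι] (u : ι → ℝ) :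
    ∃ (s : ℕ → ℝ) (e : ι ≃ Fin (Fintype.card ι)),
      (∀ i j, i ≤ j → j < Fintype.card ι → s j ≤ s i) ∧
      (∀ x, u x = s (e x)) ∧
      (∀ k, k ≤ Fintype.card ι → kLargestSum u k = ∑ i ∈ range k, s i) := by
  classical
  set d := Fintype.card ι with hd
  set e0 := Fintype.equivFin ι with he0
  set g : Fin d → ℝ := u ∘ e0.symm with hg
  set σ := Tuple.sort g with hσ
  have hmono : Monotone (g ∘ σ) := Tuple.monotone_sort g
  set b : Fin d → ℝ := fun i => g (σ i.rev) with hb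
  set s : ℕ → ℝ := fun j => if h : j < d then b ⟨j, h⟩ else 0 with hs
  set e : ι ≃ Fin d := e0.trans ((σ.symm : Equiv.Perm (Fin d)).trans Fin.revPerm) with he
  have hanti : ∀ i j, i ≤ j → j < d → s j ≤ s i := by
    intro i j hij hj
    have hi : i < d := lt_of_le_of_lt hij hj
    simp only [hs, dif_pos hi, dif_pos hj, hb]
    apply hmono
    rw [Fin.rev_le_rev]
    exact hij
  have hux : ∀ x, u x = s (e x) := by
    intro x
    have hlt : ((e x : Fin d) : ℕ) < d := (e x).2
    have hbx : s ((e x : Fin d) : ℕ) = g (σ (e x).rev) := by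
      simp only [hs, hb, dif_pos hlt, Fin.eta]
    have hrev : (e x).rev = σ.symm (e0 x) := by
      have h3 : e x = (σ.symm (e0 x)).rev := rfl
      rw [h3, Fin.rev_rev]
    rw [hbx, hrev, Equiv.apply_symm_apply]
    simp [hg]
  refine ⟨s, e, hanti, hux, ?_⟩
  intro k hk
  -- the top-k set in Fin d
  have hkd : k ≤ d := hk
  set Tk : Finset (Fin d) := Finset.map (Fin.castLEEmb hkd) Finset.univ with hTk
  have hTkcard : Tk.card = k := by simp [hTk]
  have hTksum : ∑ i ∈ Tk, s (i : ℕ) = ∑ j ∈ range k, s j := by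
    rw [hTk, Finset.sum_map, ← Fin.sum_univ_eq_sum_range (fun j => s j) k]
    simp
  have hfin : ({r : ℝ | ∃ A : Finset ι, A.card = k ∧ r = ∑ i ∈ A, u i}).Finite := by
    have : {r : ℝ | ∃ A : Finset ι, A.card = k ∧ r = ∑ i ∈ A, u i}
        ⊆ (fun A : Finset ι => ∑ i ∈ A, u i) '' Set.univ := by
      rintro r ⟨A, _, rfl⟩; exact ⟨A, Set.mem_univ _, rfl⟩
    exact (Set.finite_univ.image _).subset this
  have hgreat : IsGreatest {r : ℝ | ∃ A : Finset ι, A.card = k ∧ r = ∑ i ∈ A, u i}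
      (∑ j ∈ range k, s j) := by
    constructor
    · refine ⟨Finset.map e.symm.toEmbedding Tk, by simp [hTkcard], ?_⟩
      rw [Finset.sum_map]
      rw [← hTksum]
      apply Finset.sum_congr rfl
      intro i _
      simp only [Equiv.coe_toEmbedding]
      rw [hux (e.symm i)]
      simp
    · rintro r ⟨A, hA, rfl⟩
      have h1 : ∑ i ∈ A, u i = ∑ i ∈ Finset.map e.toEmbedding A, s (i : ℕ) := by
        rw [Finset.sum_map]
        apply Finset.sum_congr rfl
        intro x _
        exact hux x
      rw [h1]
      exact subset_sum_le s hanti _ (by simp [hA])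
  rw [kLargestSum, hgreat.csSup_eq]


lemma col_le {ι : Type*} [Fintype ι] {α : ℝ} (hα0 : 0 < α) (hα1 : α < 1)
    (u v : ι → ℝ) (hu : ∀ x, 0 ≤ u x) (hv : ∀ x, 0 ≤ v x) (h : Majorized u v) :
    ∑ x, v x ^ α ≤ ∑ x, u x ^ α := by
  classical
  obtain ⟨su, eu, hanti_u, hux_u, hkls_u⟩ := exists_sorted u
  obtain ⟨sv, ev, hanti_v, hux_v, hkls_v⟩ := exists_sorted v
  let d := Fintype.card ι
  have hsum_u : ∀ f : ℝ → ℝ, ∑ x, f (u x) = ∑ i ∈ range d, f (su i) := by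
    intro f
    rw [← Fin.sum_univ_eq_sum_range (fun i => f (su i)) d,
      ← Equiv.sum_comp eu (fun i : Fin d => f (su (i : ℕ)))]
    exact Finset.sum_congr rfl fun x _ => by rw [hux_u x]
  have hsum_v : ∀ f : ℝ → ℝ, ∑ x, f (v x) = ∑ i ∈ range d, f (sv i) := by
    intro f
    rw [← Fin.sum_univ_eq_sum_range (fun i => f (sv i)) d,
      ← Equiv.sum_comp ev (fun i : Fin d => f (sv (i : ℕ)))]
    exact Finset.sum_congr rfl fun x _ => by rw [hux_v x]
  have hsu0 : ∀ i, i < d → 0 ≤ su i := by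
    intro i hi
    have h1 := hux_u (eu.symm ⟨i, hi⟩)
    rw [Equiv.apply_symm_apply] at h1
    exact h1 ▸ hu _
  have hsv0 : ∀ i, i < d → 0 ≤ sv i := by
    intro i hi
    have h1 := hux_v (ev.symm ⟨i, hi⟩)
    rw [Equiv.apply_symm_apply] at h1
    exact h1 ▸ hv _
  have hpart : ∀ k, k ≤ d → ∑ i ∈ range k, su i ≤ ∑ i ∈ range k, sv i := by
    intro k hk
    rcases Nat.eq_zero_or_pos k with rfl | hk1
    · simp
    · rw [← hkls_u k hk, ← hkls_v k hk]
      exact h.1 k hk1 hk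
  have htot : ∑ i ∈ range d, su i = ∑ i ∈ range d, sv i := by
    have t1 := hsum_u id
    have t2 := hsum_v id
    simp only [id] at t1 t2
    rw [← t1, ← t2]
    exact h.2
  have hkar := karamata_rpow hα0 hα1 d su sv hsu0 hsv0 hanti_u hpart htot
  rw [hsum_v (fun t => t ^ α), hsum_u (fun t => t ^ α)]
  exact hkar


theorem arce_marginally_schur_concave_of_lt_one
    {X Y : Type*} [Fintype X] [Fintype Y]
    (α : ℝ) (hα : α ∈ Set.Ioo (0 : ℝ) 1)
    (p q : X → Y → ℝ)
    (hp0 : ∀ x y, 0 ≤ p x y) (hp1 : (∑ x, ∑ y, p x y) = 1)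
    (hq0 : ∀ x y, 0 ≤ q x y) (hq1 : (∑ x, ∑ y, q x y) = 1)
    (hmaj : ∀ y : Y, Majorized (fun x => q x y) (fun x => p x y)) :
    condRenyi α p ≤ condRenyi α q := by
  obtain ⟨hα0, hα1⟩ := hα
  have hcol : ∀ y, ∑ x, p x y ^ α ≤ ∑ x, q x y ^ α := fun y =>
    col_le hα0 hα1 (fun x => q x y) (fun x => p x y)
      (fun x => hq0 x y) (fun x => hp0 x y) (hmaj y)
  have hin_p : ∀ y, 0 ≤ ∑ x, p x y ^ α := fun y =>
    Finset.sum_nonneg fun x _ => Real.rpow_nonneg (hp0 x y) α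
  have hSpSq : ∑ y, (∑ x, p x y ^ α) ^ (1 / α) ≤ ∑ y, (∑ x, q x y ^ α) ^ (1 / α) :=
    Finset.sum_le_sum fun y _ =>
      Real.rpow_le_rpow (hin_p y) (hcol y) (by positivity)
  have hex : ∃ x y, 0 < p x y := by
    by_contra hcon
    push_neg at hcon
    have h0 : ∑ x, ∑ y, p x y = 0 :=
      Finset.sum_eq_zero fun x _ => Finset.sum_eq_zero fun y _ =>
        le_antisymm (hcon x y) (hp0 x y)
    rw [hp1] at h0
    norm_num at h0
  obtain ⟨x0, y0, hx0⟩ := hex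
  have h1 : 0 < ∑ x, p x y0 ^ α :=
    lt_of_lt_of_le (Real.rpow_pos_of_pos hx0 α)
      (Finset.single_le_sum (f := fun x => p x y0 ^ α)
        (fun x _ => Real.rpow_nonneg (hp0 x y0) α) (Finset.mem_univ x0))
  have hSp_pos : 0 < ∑ y, (∑ x, p x y ^ α) ^ (1 / α) :=
    lt_of_lt_of_le (Real.rpow_pos_of_pos h1 (1 / α))
      (Finset.single_le_sum (f := fun y => (∑ x, p x y ^ α) ^ (1 / α))
        (fun y _ => Real.rpow_nonneg (hin_p y) _) (Finset.mem_univ y0))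
  unfold condRenyi
  apply mul_le_mul_of_nonneg_left _ (div_nonneg hα0.le (by linarith))
  exact Real.logb_le_logb_of_le (by norm_num) hSp_pos hSpSq
end

section
/- Let α > 1 and let p and q be joint probability distributions on finite alphabets X × Y such that for every y ∈ Y the column vector (q(x,y))_{x∈X} is majorized by the column vector (p(x,y))_{x∈X}. Then H_α(X|Y)_p ≤ H_α(X|Y)_q. -/
/-! ### Auxiliary lemmas -/

/-- Extend a vector on `Fin d` to `ℕ`, by zero. -/
noncomputable def nbar {d : ℕ} (w : Fin d → ℝ) (i : ℕ) : ℝ :=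
  if h : i < d then w ⟨i, h⟩ else 0

private lemma le_val_strictMono {k d : ℕ} {f : Fin k → Fin d} (hf : StrictMono f) :
    ∀ m : ℕ, ∀ i : Fin k, (i : ℕ) = m → m ≤ (f i : ℕ) := by
  intro m
  induction m with
  | zero => intro i _; exact Nat.zero_le _
  | succ n ih =>
    intro i hi
    have hjk : n < k := by omega
    have hj := ih ⟨n, hjk⟩ rfl
    have hlt : f ⟨n, hjk⟩ < f i := hf (by rw [Fin.lt_def]; simp; omega)
    have : (f ⟨n, hjk⟩ : ℕ) < (f i : ℕ) := hlt
    omega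

private lemma kset_finite {ι : Type*} [Fintype ι] (u : ι → ℝ) (k : ℕ) :
    {s : ℝ | ∃ A : Finset ι, A.card = k ∧ s = ∑ i ∈ A, u i}.Finite := by
  apply Set.Finite.subset (Set.finite_range (fun A : Finset ι => ∑ i ∈ A, u i))
  rintro s ⟨A, _, rfl⟩
  exact ⟨A, rfl⟩

private lemma sum_subset_le_prefix {d : ℕ} {w : Fin d → ℝ} (hw : Antitone w)
    (B : Finset (Fin d)) {k : ℕ} (hB : B.card = k) :
    ∑ j ∈ B, w j ≤ ∑ i ∈ Finset.range k, nbar w i := by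
  have himg : Finset.image (B.orderEmbOfFin hB) Finset.univ = B := by
    ext j
    simp only [Finset.mem_image, Finset.mem_univ, true_and]
    constructor
    · rintro ⟨i, rfl⟩; exact Finset.orderEmbOfFin_mem B hB i
    · intro hj
      have : j ∈ Set.range (B.orderEmbOfFin hB) := by
        rw [Finset.range_orderEmbOfFin]; exact hj
      obtain ⟨i, hi⟩ := this; exact ⟨i, hi⟩
  calc ∑ j ∈ B, w j = ∑ i : Fin k, w (B.orderEmbOfFin hB i) := by
        have h : ∑ j ∈ Finset.image (⇑(B.orderEmbOfFin hB)) Finset.univ, w j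
            = ∑ i : Fin k, w (B.orderEmbOfFin hB i) :=
          Finset.sum_image (fun a _ b _ h => (B.orderEmbOfFin hB).injective h)
        rw [himg] at h
        exact h
    _ ≤ ∑ i : Fin k, nbar w (i : ℕ) := by
        apply Finset.sum_le_sum
        intro i _
        have hle : (i : ℕ) ≤ (B.orderEmbOfFin hB i : ℕ) :=
          le_val_strictMono (B.orderEmbOfFin hB).strictMono (i : ℕ) i rfl
        have hid : (i : ℕ) < d := lt_of_le_of_lt hle (B.orderEmbOfFin hB i).2
        rw [nbar, dif_pos hid]
        exact hw (show (⟨(i : ℕ), hid⟩ : Fin d) ≤ B.orderEmbOfFin hB i from hle)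
    _ = ∑ i ∈ Finset.range k, nbar w i := Fin.sum_univ_eq_sum_range _ k

private lemma prefix_mem {ι : Type*} [Fintype ι] {d : ℕ} (φ : Fin d ≃ ι) (u : ι → ℝ)
    {w : Fin d → ℝ} (huw : ∀ i, u (φ i) = w i) {k : ℕ} (hk : k ≤ d) :
    ∃ A : Finset ι, A.card = k ∧ ∑ i ∈ A, u i = ∑ i ∈ Finset.range k, nbar w i := by
  classical
  have hlt : ∀ m ∈ Finset.range k, m < d := fun m hm =>
    lt_of_lt_of_le (Finset.mem_range.1 hm) hk
  set B₀ : Finset (Fin d) := (Finset.range k).attachFin hlt with hB₀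
  refine ⟨B₀.image φ, ?_, ?_⟩
  · rw [Finset.card_image_of_injective _ φ.injective, Finset.card_attachFin,
      Finset.card_range]
  · rw [Finset.sum_image (fun a _ b _ h => φ.injective h)]
    have h1 : ∑ j ∈ B₀, u (φ j) = ∑ j ∈ B₀, w j :=
      Finset.sum_congr rfl fun j _ => huw j
    rw [h1]
    have h2 : B₀ = Finset.univ.filter (fun j : Fin d => (j : ℕ) < k) := by
      ext j
      simp [hB₀, Finset.mem_attachFin]
    rw [h2, Finset.sum_filter]
    have h3 : ∑ j : Fin d, (if (j : ℕ) < k then w j else 0)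
        = ∑ i ∈ Finset.range d, (if i < k then nbar w i else 0) := by
      rw [← Fin.sum_univ_eq_sum_range (fun i => if i < k then nbar w i else 0) d]
      apply Finset.sum_congr rfl
      intro j _
      by_cases hj : (j : ℕ) < k
      · rw [if_pos hj, if_pos hj, nbar, dif_pos j.2, Fin.eta]
      · rw [if_neg hj, if_neg hj]
    rw [h3]
    rw [← Finset.sum_subset (Finset.range_subset_range.2 hk)
      (fun x _ hx => if_neg (by simp only [Finset.mem_range] at hx ⊢; omega))]
    apply Finset.sum_congr rfl
    intro i hi
    exact if_pos (Finset.mem_range.1 hi)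

private lemma kLargestSum_eq {ι : Type*} [Fintype ι] {d : ℕ} (φ : Fin d ≃ ι) {u : ι → ℝ}
    {w : Fin d → ℝ} (hw : Antitone w) (huw : ∀ i, u (φ i) = w i) {k : ℕ} (hk : k ≤ d) :
    kLargestSum u k = ∑ i ∈ Finset.range k, nbar w i := by
  classical
  obtain ⟨A₀, hA₀, hsum₀⟩ := prefix_mem φ u huw hk
  apply le_antisymm
  · refine csSup_le ⟨∑ i ∈ A₀, u i, ⟨A₀, hA₀, rfl⟩⟩ ?_
    rintro s ⟨A, hA, rfl⟩
    have h1 : ∑ i ∈ A, u i = ∑ j ∈ A.image φ.symm, w j := by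
      rw [Finset.sum_image (fun a _ b _ h => φ.symm.injective h)]
      apply Finset.sum_congr rfl
      intro x _
      rw [← huw (φ.symm x), Equiv.apply_symm_apply]
    rw [h1]
    exact sum_subset_le_prefix hw _
      (by rw [Finset.card_image_of_injective _ φ.symm.injective, hA])
  · rw [← hsum₀]
    exact le_csSup (kset_finite u k).bddAbove ⟨A₀, hA₀, rfl⟩

private lemma total_eq {ι : Type*} [Fintype ι] {d : ℕ} (φ : Fin d ≃ ι) {u : ι → ℝ}
    {w : Fin d → ℝ} (huw : ∀ i, u (φ i) = w i) :
    ∑ i, u i = ∑ i ∈ Finset.range d, nbar w i := by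
  rw [← Fin.sum_univ_eq_sum_range (nbar w) d]
  rw [← Equiv.sum_comp φ u]
  apply Finset.sum_congr rfl
  intro j _
  rw [huw j, nbar, dif_pos j.2, Fin.eta]

private lemma exists_sorted_s6 {ι : Type*} [Fintype ι] (u : ι → ℝ) :
    ∃ w : Fin (Fintype.card ι) → ℝ, Antitone w ∧
      ∃ φ : Fin (Fintype.card ι) ≃ ι, ∀ i, u (φ i) = w i := by
  set d := Fintype.card ι
  let e : Fin d ≃ ι := (Fintype.equivFin ι).symm
  let f : Fin d → ℝ := fun i => -u (e i)
  let σ := Tuple.sort f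
  refine ⟨fun i => u (e (σ i)), ?_, ⟨σ.trans e, fun i => rfl⟩⟩
  intro a b hab
  have h := Tuple.monotone_sort f hab
  simp only [Function.comp_apply, f, neg_le_neg_iff] at h
  exact h

private lemma rpow_subgrad {α a b : ℝ} (hα : 1 < α) (ha : 0 ≤ a) (hb : 0 ≤ b) :
    a ^ α + α * a ^ (α - 1) * (b - a) ≤ b ^ α := by
  rcases eq_or_lt_of_le ha with h0 | hpos
  · rw [← h0, Real.zero_rpow (by positivity), Real.zero_rpow (by nlinarith : α - 1 ≠ 0)]
    simpa using Real.rpow_nonneg hb α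
  · have ha' : a ≠ 0 := ne_of_gt hpos
    have h1 : (-1 : ℝ) ≤ b / a - 1 := by
      have : 0 ≤ b / a := div_nonneg hb hpos.le
      linarith
    have key := one_add_mul_self_le_rpow_one_add h1 hα.le
    have h2 : (1 : ℝ) + (b / a - 1) = b / a := by ring
    rw [h2, Real.div_rpow hb hpos.le] at key
    have hapos : 0 < a ^ α := Real.rpow_pos_of_pos hpos α
    have key2 : a ^ α * (1 + α * (b / a - 1)) ≤ b ^ α := by
      have h3 := mul_le_mul_of_nonneg_left key hapos.le
      rwa [mul_comm (a ^ α) (b ^ α / a ^ α), div_mul_cancel₀ _ (ne_of_gt hapos)] at h3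
    calc a ^ α + α * a ^ (α - 1) * (b - a)
        = a ^ α * (1 + α * (b / a - 1)) := by
          rw [Real.rpow_sub hpos, Real.rpow_one]
          field_simp
      _ ≤ b ^ α := key2

private lemma sum_rpow_le {ι : Type*} [Fintype ι] {α : ℝ} (hα : 1 < α)
    {u v : ι → ℝ} (hu : ∀ i, 0 ≤ u i) (hv : ∀ i, 0 ≤ v i) (hmaj : Majorized u v) :
    ∑ i, u i ^ α ≤ ∑ i, v i ^ α := by
  classical
  set d := Fintype.card ι with hd
  obtain ⟨wq, hwq, φq, hφq⟩ := exists_sorted_s6 u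
  obtain ⟨wp, hwp, φp, hφp⟩ := exists_sorted_s6 v
  set Q : ℕ → ℝ := nbar wq with hQ
  set P : ℕ → ℝ := nbar wp with hP
  have hQ0 : ∀ i, 0 ≤ Q i := by
    intro i
    rw [hQ, nbar]
    split
    · next h => rw [← hφq ⟨i, h⟩]; exact hu _
    · exact le_refl 0
  have hP0 : ∀ i, 0 ≤ P i := by
    intro i
    rw [hP, nbar]
    split
    · next h => rw [← hφp ⟨i, h⟩]; exact hv _
    · exact le_refl 0
  have hQanti : Antitone Q := by
    intro i j hij
    rw [hQ, nbar, nbar]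
    by_cases hj : j < d
    · have hi : i < d := lt_of_le_of_lt hij hj
      rw [dif_pos hi, dif_pos hj]
      exact hwq (show (⟨i, hi⟩ : Fin d) ≤ ⟨j, hj⟩ from hij)
    · rw [dif_neg hj]
      split
      · next h => rw [← hφq ⟨i, h⟩]; exact hu _
      · exact le_refl 0
  -- partial sums comparison
  have hps : ∀ k, 1 ≤ k → k ≤ d →
      ∑ i ∈ Finset.range k, Q i ≤ ∑ i ∈ Finset.range k, P i := by
    intro k h1 h2
    rw [← kLargestSum_eq φq hwq hφq h2, ← kLargestSum_eq φp hwp hφp h2]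
    exact hmaj.1 k h1 h2
  have htot : ∑ i ∈ Finset.range d, Q i = ∑ i ∈ Finset.range d, P i := by
    rw [← total_eq φq hφq, ← total_eq φp hφp]
    exact hmaj.2
  -- Abel summation argument
  have key : 0 ≤ ∑ i ∈ Finset.range d, (α * Q i ^ (α - 1)) * (P i - Q i) := by
    have hparts := Finset.sum_range_by_parts
      (fun i => α * Q i ^ (α - 1)) (fun i => P i - Q i) d
    simp only [smul_eq_mul] at hparts
    have hAd : ∑ i ∈ Finset.range d, (P i - Q i) = 0 := by
      rw [Finset.sum_sub_distrib, htot, sub_self]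
    rw [hparts, hAd, mul_zero, zero_sub, le_neg, neg_zero]
    apply Finset.sum_nonpos
    intro i hi
    have hi' : i < d - 1 := Finset.mem_range.1 hi
    apply mul_nonpos_of_nonpos_of_nonneg
    · have hQle : Q (i + 1) ≤ Q i := hQanti (Nat.le_succ i)
      have : Q (i + 1) ^ (α - 1) ≤ Q i ^ (α - 1) :=
        Real.rpow_le_rpow (hQ0 _) hQle (by linarith)
      nlinarith
    · have h1 : 1 ≤ i + 1 := Nat.le_add_left 1 i
      have h2 : i + 1 ≤ d := by omega
      have := hps (i + 1) h1 h2
      rw [Finset.sum_sub_distrib]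
      linarith
  have step : ∀ i ∈ Finset.range d,
      Q i ^ α + (α * Q i ^ (α - 1)) * (P i - Q i) ≤ P i ^ α :=
    fun i _ => rpow_subgrad hα (hQ0 i) (hP0 i)
  have hmain := Finset.sum_le_sum step
  rw [Finset.sum_add_distrib] at hmain
  have hfin : ∑ i ∈ Finset.range d, Q i ^ α ≤ ∑ i ∈ Finset.range d, P i ^ α := by
    linarith
  -- reindex back
  have hru : ∑ i, u i ^ α = ∑ i ∈ Finset.range d, Q i ^ α := by
    rw [← Fin.sum_univ_eq_sum_range (fun i => Q i ^ α) d]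
    rw [← Equiv.sum_comp φq (fun x => u x ^ α)]
    apply Finset.sum_congr rfl
    intro j _
    rw [hφq j, hQ, nbar, dif_pos j.2, Fin.eta]
  have hrv : ∑ i, v i ^ α = ∑ i ∈ Finset.range d, P i ^ α := by
    rw [← Fin.sum_univ_eq_sum_range (fun i => P i ^ α) d]
    rw [← Equiv.sum_comp φp (fun x => v x ^ α)]
    apply Finset.sum_congr rfl
    intro j _
    rw [hφp j, hP, nbar, dif_pos j.2, Fin.eta]
  rw [hru, hrv]
  exact hfin

theorem arce_marginally_schur_concave_of_gt_one
    {X Y : Type*} [Fintype X] [Fintype Y]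
    (α : ℝ) (hα : 1 < α)
    (p q : X → Y → ℝ)
    (hp0 : ∀ x y, 0 ≤ p x y) (hp1 : (∑ x, ∑ y, p x y) = 1)
    (hq0 : ∀ x y, 0 ≤ q x y) (hq1 : (∑ x, ∑ y, q x y) = 1)
    (hmaj : ∀ y : Y, Majorized (fun x => q x y) (fun x => p x y)) :
    condRenyi α p ≤ condRenyi α q := by
  classical
  have hα0 : (0 : ℝ) < α := by linarith
  have hcol : ∀ y, ∑ x, q x y ^ α ≤ ∑ x, p x y ^ α := fun y =>
    sum_rpow_le hα (fun x => hq0 x y) (fun x => hp0 x y) (hmaj y)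
  have hsum : ∑ y, (∑ x, q x y ^ α) ^ (1 / α) ≤ ∑ y, (∑ x, p x y ^ α) ^ (1 / α) := by
    apply Finset.sum_le_sum
    intro y _
    exact Real.rpow_le_rpow
      (Finset.sum_nonneg fun x _ => Real.rpow_nonneg (hq0 x y) α)
      (hcol y) (by positivity)
  have hexq : ∃ x y, 0 < q x y := by
    by_contra h
    push_neg at h
    have : ∑ x, ∑ y, q x y ≤ 0 :=
      Finset.sum_nonpos fun x _ => Finset.sum_nonpos fun y _ => h x y
    rw [hq1] at this
    linarith
  obtain ⟨x0, y0, hx0⟩ := hexq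
  have hpos : 0 < ∑ y, (∑ x, q x y ^ α) ^ (1 / α) := by
    apply Finset.sum_pos'
    · intro y _
      exact Real.rpow_nonneg
        (Finset.sum_nonneg fun x _ => Real.rpow_nonneg (hq0 x y) α) _
    · refine ⟨y0, Finset.mem_univ y0, ?_⟩
      apply Real.rpow_pos_of_pos
      apply Finset.sum_pos'
      · intro x _; exact Real.rpow_nonneg (hq0 x y0) α
      · exact ⟨x0, Finset.mem_univ x0, Real.rpow_pos_of_pos hx0 α⟩
  have hlog : Real.logb 2 (∑ y, (∑ x, q x y ^ α) ^ (1 / α))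
      ≤ Real.logb 2 (∑ y, (∑ x, p x y ^ α) ^ (1 / α)) :=
    Real.logb_le_logb_of_le one_lt_two hpos hsum
  have hcneg : α / (1 - α) ≤ 0 :=
    le_of_lt (div_neg_of_pos_of_neg hα0 (by linarith))
  unfold condRenyi
  exact mul_le_mul_of_nonpos_left hlog hcneg
end

section
/- Let v, v′, w ∈ ℝⁿ be vectors with nonnegative entries and let S ⊆ {1,…,n} be such that vⱼ = v′ⱼ = 0 for all j ∉ S and wⱼ = 0 for all j ∈ S. If v′ is majorized by v, then v′ + w is majorized by v + w. -/
lemma kLS_bdd {ι : Type*} [Fintype ι] (u : ι → ℝ) (k : ℕ) :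
    BddAbove {s : ℝ | ∃ A : Finset ι, A.card = k ∧ s = ∑ i ∈ A, u i} := by
  have hsub : {s : ℝ | ∃ A : Finset ι, A.card = k ∧ s = ∑ i ∈ A, u i}
      ⊆ (fun A : Finset ι => ∑ i ∈ A, u i) '' Set.univ := by
    rintro s ⟨A, _, rfl⟩; exact ⟨A, trivial, rfl⟩
  exact (Set.finite_univ.image _).bddAbove.mono hsub

lemma le_kLS {ι : Type*} [Fintype ι] (u : ι → ℝ) {k : ℕ} {A : Finset ι}
    (hA : A.card = k) : (∑ i ∈ A, u i) ≤ kLargestSum u k :=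
  le_csSup (kLS_bdd u k) ⟨A, hA, rfl⟩

theorem majorized_add_of_disjoint_support
    {n : ℕ} (v v' w : Fin n → ℝ)
    (hv : ∀ j, 0 ≤ v j) (hv' : ∀ j, 0 ≤ v' j) (hw : ∀ j, 0 ≤ w j)
    (S : Finset (Fin n))
    (hvS : ∀ j ∉ S, v j = 0) (hv'S : ∀ j ∉ S, v' j = 0)
    (hwS : ∀ j ∈ S, w j = 0)
    (hmaj : Majorized v' v) :
    Majorized (v' + w) (v + w) := by
  constructor
  · intro k hk1 hkn
    simp only [Fintype.card_fin] at hkn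
    apply csSup_le
    · obtain ⟨A, -, hA⟩ := Finset.exists_subset_card_eq
        (show k ≤ (Finset.univ : Finset (Fin n)).card by simpa using hkn)
      exact ⟨_, A, hA, rfl⟩
    rintro s ⟨A, hA, rfl⟩
    set m := (A ∩ S).card with hm
    have hmS : m ≤ S.card := Finset.card_le_card (Finset.inter_subset_right)
    have hmk : m ≤ k := hA ▸ Finset.card_le_card (Finset.inter_subset_left)
    -- choose a maximizing B ⊆ S with card m
    obtain ⟨B, hBmem, hBmax⟩ := Finset.exists_max_image (Finset.powersetCard m S)
      (fun C => ∑ i ∈ C, v i) ((Finset.powersetCard_nonempty).mpr hmS)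
    obtain ⟨hBS, hBcard⟩ := Finset.mem_powersetCard.mp hBmem
    -- key: kLargestSum v m ≤ ∑ B v  (for m ≥ 1 it's the max)
    have hvmax : ∀ C : Finset (Fin n), C.card = m → (∑ i ∈ C, v i) ≤ ∑ i ∈ B, v i := by
      intro C hC
      have h1 : (∑ i ∈ C, v i) = ∑ i ∈ C ∩ S, v i := by
        rw [← Finset.sum_inter_add_sum_sdiff C S v]
        have : ∑ i ∈ C \ S, v i = 0 :=
          Finset.sum_eq_zero fun i hi => hvS i (Finset.mem_sdiff.mp hi).2
        rw [this, add_zero]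
      obtain ⟨B'', hCB'', hB''S, hB''card⟩ := Finset.exists_subsuperset_card_eq
        (Finset.inter_subset_right (s₁ := C)) (by
          calc (C ∩ S).card ≤ C.card := Finset.card_le_card Finset.inter_subset_left
            _ = m := hC) hmS
      calc (∑ i ∈ C, v i) = ∑ i ∈ C ∩ S, v i := h1
        _ ≤ ∑ i ∈ B'', v i :=
            Finset.sum_le_sum_of_subset_of_nonneg hCB'' (fun i _ _ => hv i)
        _ ≤ ∑ i ∈ B, v i := hBmax B'' (Finset.mem_powersetCard.mpr ⟨hB''S, hB''card⟩)
    have hchain : (∑ i ∈ A ∩ S, v' i) ≤ ∑ i ∈ B, v i := by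
      rcases Nat.eq_zero_or_pos m with h0 | hpos
      · have hAS : A ∩ S = ∅ := Finset.card_eq_zero.mp h0
        have hB0 : B = ∅ := Finset.card_eq_zero.mp (hBcard.trans h0)
        simp [hAS, hB0]
      · have h1 : (∑ i ∈ A ∩ S, v' i) ≤ kLargestSum v' m := le_kLS v' rfl
        have h2 : kLargestSum v' m ≤ kLargestSum v m :=
          hmaj.1 m hpos (by simpa using hmk.trans hkn)
        have h3 : kLargestSum v m ≤ ∑ i ∈ B, v i := by
          apply csSup_le
          · exact ⟨_, A ∩ S, rfl, rfl⟩
          · rintro s ⟨C, hC, rfl⟩; exact hvmax C hC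
        linarith
    -- split ∑ A (v'+w)
    have hsplit : (∑ i ∈ A, (v' + w) i) = (∑ i ∈ A ∩ S, v' i) + ∑ i ∈ A \ S, w i := by
      rw [← Finset.sum_inter_add_sum_sdiff A S (fun i => (v' + w) i)]
      congr 1
      · exact Finset.sum_congr rfl fun i hi => by
          simp [hwS i (Finset.mem_inter.mp hi).2]
      · exact Finset.sum_congr rfl fun i hi => by
          simp [hv'S i (Finset.mem_sdiff.mp hi).2]
    -- the witness set
    have hdisj : Disjoint B (A \ S) :=
      Finset.disjoint_left.mpr fun i hiB hiA => (Finset.mem_sdiff.mp hiA).2 (hBS hiB)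
    have hcard : (B ∪ (A \ S)).card = k := by
      rw [Finset.card_union_of_disjoint hdisj, hBcard]
      rw [← hA, hm]
      exact Finset.card_inter_add_card_sdiff A S
    have hsum' : (∑ i ∈ B ∪ (A \ S), (v + w) i) = (∑ i ∈ B, v i) + ∑ i ∈ A \ S, w i := by
      rw [Finset.sum_union hdisj]
      congr 1
      · exact Finset.sum_congr rfl fun i hi => by simp [hwS i (hBS hi)]
      · exact Finset.sum_congr rfl fun i hi => by
          simp [hvS i (Finset.mem_sdiff.mp hi).2]
    calc (∑ i ∈ A, (v' + w) i) = (∑ i ∈ A ∩ S, v' i) + ∑ i ∈ A \ S, w i := hsplit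
      _ ≤ (∑ i ∈ B, v i) + ∑ i ∈ A \ S, w i := by linarith
      _ = ∑ i ∈ B ∪ (A \ S), (v + w) i := hsum'.symm
      _ ≤ kLargestSum (v + w) k := le_kLS _ hcard
  · have := hmaj.2
    simp only [Pi.add_apply, Finset.sum_add_distrib]
    linarith
end

section
/- Let α ∈ [0,1), let m ≥ 2 be an integer, and let t̃ ∈ (0, 1 − 1/m]. Then the function f(u) := log₂( u^α + (m−1)^{1−α} · t̃^α ) − α · log₂( u + t̃ ) is nonincreasing on the interval [1 − t̃, ∞); that is, for all u₂ ≥ u₁ ≥ 1 − t̃ one has f(u₂) ≤ f(u₁). -/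
theorem f_monotone_decreasing
    (α : ℝ) (hα : α ∈ Set.Ico (0 : ℝ) 1)
    (m : ℕ) (hm : 2 ≤ m)
    (t : ℝ) (ht : t ∈ Set.Ioc (0 : ℝ) (1 - 1 / (m : ℝ)))
    (u₁ u₂ : ℝ) (h1 : 1 - t ≤ u₁) (h12 : u₁ ≤ u₂) :
    Real.logb 2 (u₂ ^ α + ((m : ℝ) - 1) ^ (1 - α) * t ^ α) - α * Real.logb 2 (u₂ + t) ≤
      Real.logb 2 (u₁ ^ α + ((m : ℝ) - 1) ^ (1 - α) * t ^ α) - α * Real.logb 2 (u₁ + t) := by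
  obtain ⟨hα0, hα1⟩ := hα
  obtain ⟨ht0, htm⟩ := ht
  have hm2 : (2 : ℝ) ≤ (m : ℝ) := by exact_mod_cast hm
  have hmpos : (0 : ℝ) < (m : ℝ) := by linarith
  have hinv : (1 / (m : ℝ)) * m = 1 := one_div_mul_cancel hmpos.ne'
  have ht1 : t < 1 := by
    have h0 : (0:ℝ) < 1 / (m:ℝ) := by positivity
    linarith
  have hC : 0 < ((m : ℝ) - 1) ^ (1 - α) * t ^ α := by
    apply mul_pos
    · exact Real.rpow_pos_of_pos (by linarith) _
    · exact Real.rpow_pos_of_pos ht0 _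
  set C : ℝ := ((m : ℝ) - 1) ^ (1 - α) * t ^ α with hCdef
  set g : ℝ → ℝ := fun u => Real.log (u ^ α + C) - α * Real.log (u + t) with hgdef
  have key : ∀ u : ℝ, 1 - t ≤ u →
      HasDerivAt g (α * u ^ (α - 1) / (u ^ α + C) - α * (1 / (u + t))) u := by
    intro u hu
    have hupos : 0 < u := by linarith
    have hutpos : 0 < u + t := by linarith
    have hbase : 0 < u ^ α + C := by positivity
    have d1 : HasDerivAt (fun x : ℝ => x ^ α) (α * u ^ (α - 1)) u :=
      Real.hasDerivAt_rpow_const (Or.inl hupos.ne')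
    have d2 : HasDerivAt (fun x : ℝ => x ^ α + C) (α * u ^ (α - 1)) u := d1.add_const C
    have d3 : HasDerivAt (fun x : ℝ => Real.log (x ^ α + C))
        (α * u ^ (α - 1) / (u ^ α + C)) u := d2.log hbase.ne'
    have d4 : HasDerivAt (fun x : ℝ => x + t) 1 u := (hasDerivAt_id u).add_const t
    have d5 : HasDerivAt (fun x : ℝ => Real.log (x + t)) (1 / (u + t)) u := by
      have := d4.log hutpos.ne'
      simpa using this
    exact d3.sub (d5.const_mul α)
  have hderiv_nonpos : ∀ u : ℝ, 1 - t < u → deriv g u ≤ 0 := by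
    intro u hu
    have hupos : 0 < u := by linarith
    have hutpos : 0 < u + t := by linarith
    have hbase : 0 < u ^ α + C := by positivity
    -- key inequality: u^(α-1)*(u+t) ≤ u^α + C
    have e1 : u ^ (α - 1) * u = u ^ α := by
      rw [show α = α - 1 + 1 by ring, Real.rpow_add_one hupos.ne']
      ring_nf
    have htu : t / u ≤ (m : ℝ) - 1 := by
      rw [div_le_iff₀ hupos]
      nlinarith [mul_le_mul_of_nonneg_right htm hmpos.le,
        mul_le_mul_of_nonneg_left hu.le (show (0:ℝ) ≤ (m:ℝ) - 1 by linarith)]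
    have hpow : (t / u) ^ (1 - α) ≤ ((m : ℝ) - 1) ^ (1 - α) :=
      Real.rpow_le_rpow (by positivity) htu (by linarith)
    have e3 : t * u ^ (α - 1) = t ^ α * (t / u) ^ (1 - α) := by
      rw [Real.div_rpow ht0.le hupos.le, show α - 1 = -(1 - α) by ring,
        Real.rpow_neg hupos.le, div_eq_mul_inv, ← mul_assoc, ← Real.rpow_add ht0]
      norm_num
    have e2 : t * u ^ (α - 1) ≤ C := by
      rw [e3, hCdef, mul_comm (((m:ℝ) - 1) ^ (1 - α)) (t ^ α)]
      exact mul_le_mul_of_nonneg_left hpow (Real.rpow_nonneg ht0.le α)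
    have hkey : u ^ (α - 1) * (u + t) ≤ u ^ α + C := by nlinarith [e1, e2]
    rw [(key u hu.le).deriv]
    rw [sub_nonpos, div_le_iff₀ hbase, mul_one_div]
    rw [div_mul_eq_mul_div, le_div_iff₀ hutpos]
    nlinarith [mul_le_mul_of_nonneg_left hkey hα0]
  have hg : AntitoneOn g (Set.Ici (1 - t)) := by
    apply antitoneOn_of_deriv_nonpos (convex_Ici _)
    · intro u hu
      exact (key u hu).continuousAt.continuousWithinAt
    · intro u hu
      rw [interior_Ici] at hu
      exact (key u hu.le).differentiableAt.differentiableWithinAt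
    · intro u hu
      rw [interior_Ici] at hu
      exact hderiv_nonpos u hu
  have hgle : g u₂ ≤ g u₁ := hg (Set.mem_Ici.mpr h1) (Set.mem_Ici.mpr (h1.trans h12)) h12
  have hrw : ∀ u : ℝ, Real.logb 2 (u ^ α + C) - α * Real.logb 2 (u + t) = g u / Real.log 2 := by
    intro u
    simp only [hgdef, Real.logb, sub_div, mul_div_assoc]
  have h2 : (0 : ℝ) < Real.log 2 := Real.log_pos (by norm_num)
  rw [hrw u₁, hrw u₂]
  exact (div_le_div_iff_of_pos_right h2).mpr hgle
end

section
/- Let α ∈ [0,1) and let m ≥ 2 be an integer. Then the function g(u) := (1 − u)^α + (m−1)^{1−α} · u^α is nondecreasing on the interval (0, 1 − 1/m]; that is, for all 0 < u₁ ≤ u₂ ≤ 1 − 1/m one has g(u₁) ≤ g(u₂). -/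
theorem g_monotone_increasing
    (α : ℝ) (hα : α ∈ Set.Ico (0 : ℝ) 1)
    (m : ℕ) (hm : 2 ≤ m)
    (u₁ u₂ : ℝ) (h0 : 0 < u₁) (h12 : u₁ ≤ u₂) (h2 : u₂ ≤ 1 - 1 / (m : ℝ)) :
    (1 - u₁) ^ α + ((m : ℝ) - 1) ^ (1 - α) * u₁ ^ α ≤
      (1 - u₂) ^ α + ((m : ℝ) - 1) ^ (1 - α) * u₂ ^ α := by
  obtain ⟨hα0, hα1⟩ := hα
  have hm2 : (2 : ℝ) ≤ (m : ℝ) := by exact_mod_cast hm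
  have hm1 : (1 : ℝ) ≤ (m : ℝ) - 1 := by linarith
  have hmpos : (0 : ℝ) < (m : ℝ) := by linarith
  have hu2lt : u₂ < 1 := by
    have : 0 < 1 / (m : ℝ) := by positivity
    linarith
  set c : ℝ := ((m : ℝ) - 1) ^ (1 - α) with hc
  have hcpos : 0 < c := Real.rpow_pos_of_pos (by linarith) _
  have hd : ∀ x : ℝ, u₁ < x → x < u₂ →
      HasDerivAt (fun u : ℝ => (1 - u) ^ α + c * u ^ α)
        (α * (1 - x) ^ (α - 1) * (-1) + c * (α * x ^ (α - 1))) x := by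
    intro x hx1 hx2
    have hxpos : 0 < x := lt_trans h0 hx1
    have h1xpos : 0 < 1 - x := by
      have : x < 1 := lt_trans hx2 hu2lt
      linarith
    have d1 : HasDerivAt (fun u : ℝ => (1 - u) ^ α)
        (α * (1 - x) ^ (α - 1) * (-1)) x := by
      have hs : HasDerivAt (fun u : ℝ => 1 - u) (-1) x := (hasDerivAt_id x).const_sub 1
      exact (Real.hasDerivAt_rpow_const (p := α) (Or.inl h1xpos.ne')).comp x hs
    have d2 : HasDerivAt (fun u : ℝ => c * u ^ α) (c * (α * x ^ (α - 1))) x :=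
      (Real.hasDerivAt_rpow_const (p := α) (Or.inl hxpos.ne')).const_mul c
    exact d1.add d2
  have key : MonotoneOn (fun u : ℝ => (1 - u) ^ α + c * u ^ α) (Set.Icc u₁ u₂) := by
    apply monotoneOn_of_deriv_nonneg (convex_Icc u₁ u₂)
    · apply Continuous.continuousOn
      have h1 : Continuous fun u : ℝ => (1 - u) ^ α := by
        apply Continuous.comp (g := fun x : ℝ => x ^ α)
        · exact continuous_iff_continuousAt.2 fun x =>
            Real.continuousAt_rpow_const x α (Or.inr hα0)
        · continuity
      have h2 : Continuous fun u : ℝ => u ^ α :=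
        continuous_iff_continuousAt.2 fun x =>
          Real.continuousAt_rpow_const x α (Or.inr hα0)
      exact h1.add (continuous_const.mul h2)
    · intro x hx
      rw [interior_Icc] at hx
      exact ((hd x hx.1 hx.2).differentiableAt).differentiableWithinAt
    · intro x hx
      rw [interior_Icc] at hx
      obtain ⟨hx1, hx2⟩ := hx
      have hxpos : 0 < x := lt_trans h0 hx1
      have hx1' : x < 1 := lt_trans hx2 hu2lt
      have h1xpos : 0 < 1 - x := by linarith
      rw [(hd x hx1 hx2).deriv]
      -- need: 0 ≤ α * (1-x)^(α-1) * (-1) + c * (α * x^(α-1))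
      have hkey : (1 - x) ^ (α - 1) ≤ c * x ^ (α - 1) := by
        -- first: x ^ (1-α) ≤ c * (1-x)^(1-α)
        have hub : x ≤ ((m : ℝ) - 1) * (1 - x) := by
          have hmu : (m : ℝ) * x ≤ (m : ℝ) - 1 := by
            have : x ≤ 1 - 1 / (m : ℝ) := le_of_lt (lt_of_lt_of_le hx2 h2)
            have h' : (m : ℝ) * x ≤ (m : ℝ) * (1 - 1 / (m : ℝ)) :=
              mul_le_mul_of_nonneg_left this (le_of_lt hmpos)
            have : (m : ℝ) * (1 - 1 / (m : ℝ)) = (m : ℝ) - 1 := by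
              field_simp
            linarith
          nlinarith
        have hmain : x ^ (1 - α) ≤ c * (1 - x) ^ (1 - α) := by
          have := Real.rpow_le_rpow (le_of_lt hxpos) hub (by linarith : (0:ℝ) ≤ 1 - α)
          rwa [Real.mul_rpow (by linarith) (le_of_lt h1xpos)] at this
        have ha : (0 : ℝ) < (1 - x) ^ (1 - α) := Real.rpow_pos_of_pos h1xpos _
        have hb : (0 : ℝ) < x ^ (1 - α) := Real.rpow_pos_of_pos hxpos _
        have e1 : (1 - x) ^ (α - 1) = ((1 - x) ^ (1 - α))⁻¹ := by
          rw [← Real.rpow_neg (le_of_lt h1xpos)]; ring_nf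
        have e2 : x ^ (α - 1) = (x ^ (1 - α))⁻¹ := by
          rw [← Real.rpow_neg (le_of_lt hxpos)]; ring_nf
        rw [e1, e2, inv_eq_one_div, inv_eq_one_div, mul_one_div,
          div_le_div_iff₀ ha hb]
        nlinarith
      have hterm : 0 ≤ α * (c * x ^ (α - 1) - (1 - x) ^ (α - 1)) := by
        apply mul_nonneg hα0
        linarith
      nlinarith [hterm]
  have := key ⟨le_rfl, h12⟩ ⟨h12, le_rfl⟩ h12
  simpa using this
end
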